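/- Cardinality of the discretized fundamental region of B_n and C_n for odd M: For every integer n ≥ 1 and every integer k ≥ 0, the number of n-tuples (s₁, s₂, …, s_n) of nonnegative integers satisfying s₁ + 2s₂ + 2s₃ + ⋯ + 2s_n ≤ 2k + 1 equals 2·binom(n+k, n). -/

import Mathlib

lemma card_sum_eq (n k : ℕ) :
    Nat.card {s : Fin n → ℕ // ∑ i, s i = k} = Nat.multichoose n k := by
  have e1 : {s : Fin n → ℕ // ∑ i, s i = k} ≃ {f : Fin n →₀ ℕ // Multiset.card f.toMultiset = k} :=
    Equiv.subtypeEquiv Finsupp.equivFunOnFinite.symm (by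
      intro f
      rw [Finsupp.card_toMultiset, Finsupp.sum_fintype]
      · simp [Finsupp.equivFunOnFinite]; rfl
      · intro; rfl)
  have e2 : {f : Fin n →₀ ℕ // Multiset.card f.toMultiset = k} ≃ Sym (Fin n) k :=
    { toFun := fun f => ⟨f.1.toMultiset, f.2⟩
      invFun := fun m => ⟨Multiset.toFinsupp m.1, by simp [m.2]⟩
      left_inv := fun f => by simp
      right_inv := fun m => Subtype.ext (Multiset.toFinsupp_toMultiset m.1) }
  rw [Nat.card_congr (e1.trans e2), Nat.card_eq_fintype_card,
    Sym.card_sym_fin_eq_multichoose]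

lemma card_sum_le (n k : ℕ) :
    Nat.card {s : Fin n → ℕ // ∑ i, s i ≤ k} = (n + k).choose k := by
  have e : {s : Fin n → ℕ // ∑ i, s i ≤ k} ≃ {s : Fin (n + 1) → ℕ // ∑ i, s i = k} :=
    { toFun := fun s => ⟨Fin.cons (k - ∑ i, s.1 i) s.1, by
        rw [Fin.sum_cons]; have := s.2; omega⟩
      invFun := fun t => ⟨Fin.tail t.1, by
        have := t.2; rw [Fin.sum_univ_succ] at this
        have h : ∑ i, Fin.tail t.1 i = ∑ i : Fin n, t.1 i.succ := rfl
        omega⟩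
      left_inv := fun s => by simp [Fin.tail_cons]
      right_inv := fun t => by
        have := t.2; rw [Fin.sum_univ_succ] at this
        have h : ∑ i, Fin.tail t.1 i = ∑ i : Fin n, t.1 i.succ := rfl
        apply Subtype.ext
        show Fin.cons (k - ∑ i, Fin.tail t.1 i) (Fin.tail t.1) = t.1
        rw [show k - ∑ i, Fin.tail t.1 i = t.1 0 by omega]
        exact Fin.cons_self_tail t.1 }
  rw [Nat.card_congr e, card_sum_eq, Nat.multichoose_eq]
  congr 1
  omega

/-- Cardinality of the discretized fundamental region of `Bₙ` and `Cₙ` for odd `M = 2k+1`: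
the number of `n`-tuples `(s₁, …, sₙ)` of nonnegative integers with
`s₁ + 2s₂ + ⋯ + 2sₙ ≤ 2k + 1` equals `2·C(n+k, n)`. -/
theorem card_FM_odd (n k : ℕ) (hn : 1 ≤ n) :
    Nat.card {s : Fin n → ℕ //
        ∑ i : Fin n, (if (i : ℕ) = 0 then 1 else 2) * s i ≤ 2 * k + 1} =
      2 * Nat.choose (n + k) n := by
  obtain ⟨m, rfl⟩ : ∃ m, n = m + 1 := ⟨n - 1, by omega⟩
  have key : ∀ s : Fin (m + 1) → ℕ,
      ∑ i : Fin (m + 1), (if (i : ℕ) = 0 then 1 else 2) * s i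
        = s 0 + 2 * ∑ i : Fin m, s i.succ := by
    intro s
    rw [Fin.sum_univ_succ]
    simp [Finset.mul_sum]
  have e : {s : Fin (m + 1) → ℕ //
        ∑ i : Fin (m + 1), (if (i : ℕ) = 0 then 1 else 2) * s i ≤ 2 * k + 1}
      ≃ Fin 2 × {t : Fin (m + 1) → ℕ // ∑ i, t i ≤ k} :=
    { toFun := fun s =>
        (⟨s.1 0 % 2, by omega⟩,
         ⟨Fin.cons (s.1 0 / 2) (Fin.tail s.1), by
            have hs := s.2; rw [key] at hs
            rw [Fin.sum_cons]
            have h : ∑ i, Fin.tail s.1 i = ∑ i : Fin m, s.1 i.succ := rfl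
            omega⟩)
      invFun := fun p =>
        ⟨Fin.cons (2 * p.2.1 0 + (p.1 : ℕ)) (Fin.tail p.2.1), by
          rw [key]
          have hb : (p.1 : ℕ) < 2 := p.1.2
          have ht := p.2.2; rw [Fin.sum_univ_succ] at ht
          have h : ∀ i : Fin m, (Fin.cons (2 * p.2.1 0 + (p.1 : ℕ)) (Fin.tail p.2.1) :
              Fin (m+1) → ℕ) i.succ = p.2.1 i.succ := fun i => by
            rw [Fin.cons_succ]; rfl
          rw [Fin.cons_zero, Finset.sum_congr rfl fun i _ => h i]
          omega⟩
      left_inv := fun s => by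
        apply Subtype.ext
        show Fin.cons (2 * (s.1 0 / 2) + s.1 0 % 2)
            (Fin.tail (Fin.cons (s.1 0 / 2) (Fin.tail s.1))) = s.1
        rw [Fin.tail_cons, show 2 * (s.1 0 / 2) + s.1 0 % 2 = s.1 0 by omega]
        exact Fin.cons_self_tail s.1
      right_inv := fun p => by
        have hb : (p.1 : ℕ) < 2 := p.1.2
        refine Prod.ext (Fin.ext ?_) (Subtype.ext ?_)
        · show (Fin.cons (2 * p.2.1 0 + (p.1 : ℕ)) (Fin.tail p.2.1) :
              Fin (m+1) → ℕ) 0 % 2 = (p.1 : ℕ)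
          rw [Fin.cons_zero]; omega
        · show Fin.cons ((Fin.cons (2 * p.2.1 0 + (p.1 : ℕ)) (Fin.tail p.2.1) :
              Fin (m+1) → ℕ) 0 / 2)
            (Fin.tail (Fin.cons (2 * p.2.1 0 + (p.1 : ℕ)) (Fin.tail p.2.1))) = p.2.1
          rw [Fin.cons_zero, Fin.tail_cons,
            show (2 * p.2.1 0 + (p.1 : ℕ)) / 2 = p.2.1 0 by omega]
          exact Fin.cons_self_tail p.2.1 }
  rw [Nat.card_congr e, Nat.card_prod, Nat.card_eq_fintype_card, Fintype.card_fin,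
    card_sum_le]
  congr 1
  rw [← Nat.choose_symm (by omega : k ≤ m + 1 + k)]
  congr 1
  omega
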